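/- Let (E,T) be an output stable pair with E ∈ L(X,Y), T ∈ L(X), let S ∈ S(U,Y), and define N ∈ L(X,U) by N = Σ_{j≥0} S_j* E T^j (where S(z) = Σ_j S_j z^j), equivalently via N* = O_{E,T}* M_S|_U. Then for every x ∈ X the data set {S, T, E, N, x} is AIP-admissible; in particular M_{F^S} = (I − M_S M_S*) O_{E,T} maps X into H(K_S), P := M_{F^S}^{[*]} M_{F^S} = O_{E,T}* O_{E,T} − O_{N,T}* O_{N,T} satisfies the Stein equation P − T*PT = E*E − N*N, and M_{F^S}^{[*]} = O_{E,T}*|_{H(K_S)}, so that the interpolation condition M_{F^S}^{[*]} f = x coincides with the left-tangential operator-argument condition (E* f)^{∧L}(T*) = x. -/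

import Mathlib

open ContinuousLinearMap Metric
open scoped InnerProductSpace ComplexOrder

noncomputable section

/-- The operator-valued Schur class on the unit disk. -/
def IsSchur {U Y : Type*}
    [NormedAddCommGroup U] [NormedSpace ℂ U]
    [NormedAddCommGroup Y] [NormedSpace ℂ Y]
    (S : ℂ → (U →L[ℂ] Y)) : Prop :=
  AnalyticOnNhd ℂ S (ball (0:ℂ) 1) ∧ ∀ z ∈ ball (0:ℂ) 1, ‖S z‖ ≤ 1

/-- The Hardy space `H²_Y`, realized as `ℓ²(ℕ, Y)` via Taylor coefficients. -/
abbrev H2 (Y : Type*) [NormedAddCommGroup Y] [InnerProductSpace ℂ Y] : Type _ :=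
  lp (fun _ : ℕ => Y) 2

/-- Evaluation of an `H²`-element (given by its Taylor coefficients) at `z ∈ D`. -/
def hardyEval {Y : Type*} [NormedAddCommGroup Y] [InnerProductSpace ℂ Y]
    [CompleteSpace Y] (f : H2 Y) (z : ℂ) : Y :=
  ∑' n : ℕ, z ^ n • f n

lemma aux_coeff_zero (c : ℕ → ℂ)
    (h : ∀ z : ℂ, z ∈ ball (0:ℂ) 1 → HasSum (fun m : ℕ => c m * z ^ m) 0) :
    ∀ n, c n = 0 := by
  have h34 : ((3/4 : ℝ) : ℂ) ∈ ball (0:ℂ) 1 := by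
    simp only [mem_ball, dist_zero_right, Complex.norm_real]
    norm_num
  obtain ⟨C, hC⟩ : ∃ C : ℝ, ∀ m : ℕ, ‖c m‖ * (3/4 : ℝ) ^ m ≤ C := by
    have ht : Filter.Tendsto (fun m : ℕ => ‖c m * ((3/4 : ℝ) : ℂ) ^ m‖)
        Filter.atTop (nhds 0) := by
      simpa using ((h _ h34).summable.tendsto_atTop_zero.norm)
    obtain ⟨C, hC⟩ := ht.bddAbove_range
    refine ⟨C, fun m => ?_⟩
    have h1 : ‖c m * ((3/4 : ℝ) : ℂ) ^ m‖ ≤ C := hC ⟨m, rfl⟩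
    calc ‖c m‖ * (3/4 : ℝ) ^ m = ‖c m * ((3/4 : ℝ) : ℂ) ^ m‖ := by
          simp [norm_mul, norm_pow, Complex.norm_real]
      _ ≤ C := h1
  have hC0 : 0 ≤ C := le_trans (by positivity) (hC 0)
  have hCb : ∀ m : ℕ, ‖c m‖ ≤ C * (4/3 : ℝ) ^ m := by
    intro m
    have : ‖c m‖ = (‖c m‖ * (3/4 : ℝ) ^ m) * (4/3 : ℝ) ^ m := by
      rw [mul_assoc, ← mul_pow]
      norm_num
    rw [this]
    exact mul_le_mul_of_nonneg_right (hC m) (by positivity)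
  intro n
  induction n using Nat.strong_induction_on with
  | _ n IH =>
  have key : ∀ t : ℝ, 0 < t → t ≤ 1/2 → ‖c n‖ ≤ (C * (4/3 : ℝ) ^ (n+1) * 3) * t := by
    intro t ht0 ht2
    have htlt : ‖(t : ℂ)‖ < 1 := by
      simp only [Complex.norm_real, Real.norm_eq_abs, abs_of_pos ht0]; linarith
    have hztne : (t : ℂ) ≠ 0 := by exact_mod_cast ht0.ne'
    have h1 : HasSum (fun m : ℕ => c m * (t:ℂ) ^ m) 0 := h _ (mem_ball_zero_iff.mpr htlt)
    have hsum0 : ∑ i ∈ Finset.range n, c i * (t:ℂ) ^ i = 0 :=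
      Finset.sum_eq_zero fun i hi => by rw [IH i (Finset.mem_range.mp hi), zero_mul]
    have h2 : HasSum (fun j : ℕ => c (j + n) * (t:ℂ) ^ (j + n)) 0 := by
      refine (hasSum_nat_add_iff (f := fun m : ℕ => c m * (t:ℂ) ^ m) n).mpr ?_
      rw [hsum0]
      simpa using h1
    have h3 : HasSum (fun j : ℕ => c (j + n) * (t:ℂ) ^ j) 0 := by
      have h2' : HasSum (fun j : ℕ => (c (j + n) * (t:ℂ) ^ j) * (t:ℂ) ^ n) 0 := by
        simpa only [pow_add, mul_assoc] using h2
      have h2'' := h2'.mul_right ((t:ℂ) ^ n)⁻¹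
      simpa [mul_assoc, mul_inv_cancel₀ (pow_ne_zero n hztne)] using h2''
    have h4 : HasSum (fun j : ℕ => c (j + 1 + n) * (t:ℂ) ^ (j + 1)) (-(c n)) := by
      have := (hasSum_nat_add_iff' (f := fun j : ℕ => c (j + n) * (t:ℂ) ^ j) 1).mpr h3
      simpa using this
    have hb : HasSum (fun j : ℕ => (C * (4/3 : ℝ) ^ (n+1) * t) * (2/3 : ℝ) ^ j)
        (C * (4/3 : ℝ) ^ (n+1) * 3 * t) := by
      have hg := hasSum_geometric_of_lt_one (by norm_num : (0:ℝ) ≤ 2/3)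
        (by norm_num : (2/3 : ℝ) < 1)
      have h' := hg.mul_left (C * (4/3 : ℝ) ^ (n+1) * t)
      rw [show C * (4/3 : ℝ) ^ (n+1) * t * ((1:ℝ) - 2/3)⁻¹ = C * (4/3 : ℝ) ^ (n+1) * 3 * t from by
        rw [show ((1:ℝ) - 2/3)⁻¹ = 3 from by norm_num]; ring] at h'
      exact h'
    have hnorm : ‖c n‖ = ‖∑' j : ℕ, c (j + 1 + n) * (t:ℂ) ^ (j + 1)‖ := by
      rw [h4.tsum_eq, norm_neg]
    rw [hnorm]
    refine tsum_of_norm_bounded hb fun j => ?_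
    have e1 : ‖c (j + 1 + n) * (t:ℂ) ^ (j + 1)‖ = ‖c (j + 1 + n)‖ * t ^ (j + 1) := by
      simp [norm_mul, norm_pow, Complex.norm_real, abs_of_pos ht0]
    rw [e1]
    have e2 : t ^ (j + 1) ≤ t * (1/2 : ℝ) ^ j := by
      calc t ^ (j + 1) = t * t ^ j := by ring
        _ ≤ t * (1/2 : ℝ) ^ j := by
            apply mul_le_mul_of_nonneg_left _ ht0.le
            exact pow_le_pow_left₀ ht0.le ht2 j
    calc ‖c (j + 1 + n)‖ * t ^ (j + 1)
        ≤ (C * (4/3 : ℝ) ^ (j + 1 + n)) * (t * (1/2 : ℝ) ^ j) := by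
          apply mul_le_mul (hCb _) e2 (by positivity) (by positivity)
      _ = C * (4/3 : ℝ) ^ (n+1) * t * (2/3 : ℝ) ^ j := by
          rw [show j + 1 + n = (n + 1) + j from by omega, pow_add]
          have : (4/3 : ℝ) ^ j * (1/2 : ℝ) ^ j = (2/3 : ℝ) ^ j := by
            rw [← mul_pow]; norm_num
          rw [← this]; ring
  have hfin : ‖c n‖ ≤ 0 := by
    by_contra hcon
    push_neg at hcon
    set K := C * (4/3 : ℝ) ^ (n+1) * 3 with hKdef
    have hK0 : 0 ≤ K := by positivity
    have ht0 : 0 < min (1/2 : ℝ) (‖c n‖ / (2 * (K + 1))) :=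
      lt_min (by norm_num) (div_pos hcon (by linarith))
    have hkey := key _ ht0 (min_le_left _ _)
    have h5 : K * min (1/2 : ℝ) (‖c n‖ / (2 * (K + 1)))
        ≤ (K + 1) * (‖c n‖ / (2 * (K + 1))) :=
      mul_le_mul (by linarith) (min_le_right _ _) ht0.le (by linarith)
    have h6 : (K + 1) * (‖c n‖ / (2 * (K + 1))) = ‖c n‖ / 2 := by
      field_simp
    rw [h6] at h5
    linarith
  exact norm_le_zero_iff.mp hfin

lemma hardyEval_hasSum {Y : Type*} [NormedAddCommGroup Y] [InnerProductSpace ℂ Y]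
    [CompleteSpace Y] (f : H2 Y) {z : ℂ} (hz : ‖z‖ < 1) :
    HasSum (fun m : ℕ => z ^ m • (f m : Y)) (hardyEval f z) := by
  have hs : Summable (fun m : ℕ => z ^ m • (f m : Y)) := by
    refine Summable.of_norm (Summable.of_nonneg_of_le (fun m => norm_nonneg _) (fun m => ?_)
      ((summable_geometric_of_lt_one (norm_nonneg z) hz).mul_left ‖f‖))
    rw [norm_smul, norm_pow]
    calc ‖z‖ ^ m * ‖f m‖ ≤ ‖z‖ ^ m * ‖f‖ := by
          have := lp.norm_apply_le_norm (by norm_num : (2 : ENNReal) ≠ 0) f m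
          exact mul_le_mul_of_nonneg_left this (by positivity)
      _ = ‖f‖ * ‖z‖ ^ m := mul_comm _ _
  simpa [hardyEval] using hs.hasSum

lemma obs_inner {X W : Type*} [NormedAddCommGroup X] [InnerProductSpace ℂ X] [CompleteSpace X]
    [NormedAddCommGroup W] [InnerProductSpace ℂ W] [CompleteSpace W]
    (T : X →L[ℂ] X) (F : X →L[ℂ] W) (O : X →L[ℂ] H2 W)
    (hO : ∀ (x : X) (n : ℕ), O x n = F ((T ^ n) x)) (v x : X) :
    ⟪O v, O x⟫_ℂ = ⟪F v, F x⟫_ℂ + ⟪O (T v), O (T x)⟫_ℂ := by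
  have h1 : HasSum (fun m : ℕ => ⟪F ((T ^ m) v), F ((T ^ m) x)⟫_ℂ) ⟪O v, O x⟫_ℂ := by
    have := lp.hasSum_inner (𝕜 := ℂ) (O v) (O x)
    simpa [hO] using this
  have h2 : HasSum (fun m : ℕ => ⟪F ((T ^ (m + 1)) v), F ((T ^ (m + 1)) x)⟫_ℂ)
      (⟪O v, O x⟫_ℂ - ⟪F v, F x⟫_ℂ) := by
    have := (hasSum_nat_add_iff'
      (f := fun m : ℕ => ⟪F ((T ^ m) v), F ((T ^ m) x)⟫_ℂ) 1).mpr h1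
    simpa using this
  have h3 : HasSum (fun m : ℕ => ⟪F ((T ^ (m + 1)) v), F ((T ^ (m + 1)) x)⟫_ℂ)
      ⟪O (T v), O (T x)⟫_ℂ := by
    have := lp.hasSum_inner (𝕜 := ℂ) (O (T v)) (O (T x))
    simpa [hO, pow_succ, mul_apply] using this
  exact sub_eq_iff_eq_add'.mp (h2.unique h3)

set_option maxHeartbeats 1000000 in
/-- Let `(E,T)` be an output stable pair, `S ∈ S(U,Y)`, and define
`N = Σ_j S_j* E T^j`.  Then for every `x ∈ X` the data set `{S,T,E,N,x}` is
`AIP`-admissible: `M_{F^S} = (I − M_S M_S*) O_{E,T}` maps `X` into `H(K_S)`;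
`P := M_{F^S}^{[*]} M_{F^S} = O_{E,T}* O_{E,T} − O_{N,T}* O_{N,T}` satisfies the Stein
equation `P − T* P T = E* E − N* N`; and `M_{F^S}^{[*]} = O_{E,T}*|_{H(K_S)}`, so the
interpolation condition `M_{F^S}^{[*]} f = x` coincides with the left-tangential
operator-argument condition `(E* f)^{∧L}(T*) = x`. -/
theorem stmt16
    {X U Y : Type*}
    [NormedAddCommGroup X] [InnerProductSpace ℂ X] [CompleteSpace X]
    [NormedAddCommGroup U] [InnerProductSpace ℂ U] [CompleteSpace U]
    [NormedAddCommGroup Y] [InnerProductSpace ℂ Y] [CompleteSpace Y]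
    (T : X →L[ℂ] X) (E : X →L[ℂ] Y)
    -- `(E,T)` is output stable, with observability operator `O_{E,T}`
    (OET : X →L[ℂ] H2 Y) (hOET : ∀ (x : X) (n : ℕ), OET x n = E ((T ^ n) x))
    -- the Schur-class function `S`, with Taylor coefficients `S_j` and
    -- (contractive) multiplication operator `M_S : H²_U → H²_Y`
    (S : ℂ → (U →L[ℂ] Y)) (hS : IsSchur S)
    (Scoef : ℕ → (U →L[ℂ] Y))
    (hScoef : ∀ z ∈ ball (0:ℂ) 1, ∀ u : U,
      HasSum (fun n : ℕ => z ^ n • Scoef n u) (S z u))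
    (MS : H2 U →L[ℂ] H2 Y) (hMSnorm : ‖MS‖ ≤ 1)
    (hMS : ∀ f : H2 U, ∀ z ∈ ball (0:ℂ) 1,
      hardyEval (MS f) z = S z (hardyEval f z))
    -- `N := Σ_j S_j* E T^j`
    (N : X →L[ℂ] U)
    (hN : ∀ x : X, HasSum (fun j : ℕ => adjoint (Scoef j) (E ((T ^ j) x))) (N x))
    -- the de Branges–Rovnyak space `H(K_S)`, contractively included in `H²_Y` via `ι`
    -- with `ι ι^{[*]} = I − M_S M_S*`
    (HSp : Type*) [NormedAddCommGroup HSp] [InnerProductSpace ℂ HSp]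
    [CompleteSpace HSp]
    (ι : HSp →L[ℂ] H2 Y) (hιinj : Function.Injective ι)
    (hι : ι ∘L adjoint ι = 1 - MS ∘L adjoint MS) :
    -- `M_{F^S} = (I − M_S M_S*) O_{E,T}` maps `X` into `H(K_S)` ...
    (∃ MF : X →L[ℂ] HSp, ι ∘L MF = (1 - MS ∘L adjoint MS) ∘L OET) ∧
    -- ... and for the (unique) such `M_{F^S}`:
    (∀ MF : X →L[ℂ] HSp, ι ∘L MF = (1 - MS ∘L adjoint MS) ∘L OET →
      -- `(N,T)` is output stable and `P = O_{E,T}* O_{E,T} − O_{N,T}* O_{N,T}`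
      (∃ ONT : X →L[ℂ] H2 U, (∀ (x : X) (n : ℕ), ONT x n = N ((T ^ n) x)) ∧
        adjoint MF ∘L MF = adjoint OET ∘L OET - adjoint ONT ∘L ONT) ∧
      -- the Stein equation for `P := M_{F^S}^{[*]} M_{F^S}`
      ((adjoint MF ∘L MF) - adjoint T ∘L (adjoint MF ∘L MF) ∘L T
        = adjoint E ∘L E - adjoint N ∘L N) ∧
      -- `M_{F^S}^{[*]} = O_{E,T}*|_{H(K_S)}`: the interpolation condition
      -- `M_{F^S}^{[*]} f = x` coincides with `(E* f)^{∧L}(T*) = O_{E,T}* f = x`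
      (adjoint MF = adjoint OET ∘L ι)) := by
  -- Fourier coefficients of `MS` applied to monomials
  have hMSsingle : ∀ (n : ℕ) (u : U) (m : ℕ),
      ((MS (lp.single 2 n u)) m : Y) = if n ≤ m then Scoef (m - n) u else 0 := by
    intro n u m
    set e : H2 U := lp.single 2 n u with he
    have heval : ∀ z : ℂ, ‖z‖ < 1 → hardyEval e z = z ^ n • u := by
      intro z hz
      rw [hardyEval, tsum_eq_single n]
      · rw [he, lp.single_apply_self (E := fun _ : ℕ => U)]
      · intro m' hm'
        rw [he, lp.single_apply_ne (E := fun _ : ℕ => U) 2 n u hm', smul_zero]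
    have hcand : ∀ z : ℂ, ‖z‖ < 1 →
        HasSum (fun k : ℕ => z ^ k • (if n ≤ k then Scoef (k - n) u else 0 : Y))
          (hardyEval (MS e) z) := by
      intro z hz
      have h0 := hScoef z (mem_ball_zero_iff.mpr hz) u
      have h1 : HasSum (fun j : ℕ => z ^ (j + n) • Scoef j u) (z ^ n • S z u) := by
        have hfe : (fun j : ℕ => z ^ (j + n) • Scoef j u)
            = fun j : ℕ => z ^ n • (z ^ j • Scoef j u) := by
          funext j
          rw [smul_smul, ← pow_add, add_comm j n]
        rw [hfe]
        exact h0.const_smul _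
      have hF : HasSum (fun j : ℕ =>
          z ^ (j + n) • (if n ≤ j + n then Scoef (j + n - n) u else 0 : Y))
          (z ^ n • S z u) := by
        simpa [Nat.add_sub_cancel, Nat.le_add_left] using h1
      have h2 := (hasSum_nat_add_iff
        (f := fun k : ℕ => z ^ k • (if n ≤ k then Scoef (k - n) u else 0 : Y)) n).mp hF
      have hzero : ∑ i ∈ Finset.range n,
          z ^ i • (if n ≤ i then Scoef (i - n) u else 0 : Y) = 0 :=
        Finset.sum_eq_zero fun i hi => by
          have hilt := Finset.mem_range.mp hi
          rw [if_neg (by omega), smul_zero]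
      rw [hzero, add_zero] at h2
      have heq : hardyEval (MS e) z = z ^ n • S z u := by
        rw [hMS e z (mem_ball_zero_iff.mpr hz), heval z hz, map_smul]
      rw [heq]
      exact h2
    refine ext_inner_left ℂ fun y => ?_
    have hz0 : ∀ z : ℂ, z ∈ ball (0:ℂ) 1 →
        HasSum (fun k : ℕ =>
          (⟪y, ((MS e) k : Y)⟫_ℂ - ⟪y, (if n ≤ k then Scoef (k - n) u else 0 : Y)⟫_ℂ)
            * z ^ k) 0 := by
      intro z hz
      have hz' := mem_ball_zero_iff.mp hz
      have hA := (innerSL ℂ y).hasSum (hardyEval_hasSum (MS e) hz')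
      have hB := (innerSL ℂ y).hasSum (hcand z hz')
      have hAB := hA.sub hB
      have hfe : (fun k : ℕ => (innerSL ℂ y) (z ^ k • ((MS e) k : Y))
          - (innerSL ℂ y) (z ^ k • (if n ≤ k then Scoef (k - n) u else 0 : Y)))
          = fun k : ℕ =>
          (⟪y, ((MS e) k : Y)⟫_ℂ - ⟪y, (if n ≤ k then Scoef (k - n) u else 0 : Y)⟫_ℂ)
            * z ^ k := by
        funext k
        simp only [innerSL_apply_apply, inner_smul_right]
        ring
      rw [hfe] at hAB
      simpa using hAB
    have := aux_coeff_zero _ hz0 m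
    exact sub_eq_zero.mp this
  -- components of `adjoint MS ∘L OET`
  have hONTapp : ∀ (x : X) (n : ℕ),
      (((adjoint MS ∘L OET) x) n : U) = N ((T ^ n) x) := by
    intro x n
    refine ext_inner_left ℂ fun u => ?_
    have lhs1 : ⟪u, (((adjoint MS ∘L OET) x) n : U)⟫_ℂ
        = ⟪MS (lp.single 2 n u), OET x⟫_ℂ := by
      rw [comp_apply,
        ← lp.inner_single_left (𝕜 := ℂ) (G := fun _ : ℕ => U) n u (adjoint MS (OET x)),
        adjoint_inner_right]
    have hSum1 : HasSum
        (fun m : ℕ => ⟪((MS (lp.single 2 n u)) m : Y), ((OET x) m : Y)⟫_ℂ)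
        ⟪MS (lp.single 2 n u), OET x⟫_ℂ := lp.hasSum_inner (𝕜 := ℂ) _ _
    have hSum2 : HasSum
        (fun j : ℕ => ⟪u, adjoint (Scoef j) (E ((T ^ j) ((T ^ n) x)))⟫_ℂ)
        ⟪u, N ((T ^ n) x)⟫_ℂ := (innerSL ℂ u).hasSum (hN ((T ^ n) x))
    have hshift : (fun j : ℕ => ⟪u, adjoint (Scoef j) (E ((T ^ j) ((T ^ n) x)))⟫_ℂ)
        = fun j : ℕ =>
          ⟪((MS (lp.single 2 n u)) (j + n) : Y), ((OET x) (j + n) : Y)⟫_ℂ := by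
      funext j
      rw [adjoint_inner_right, hMSsingle n u (j + n),
        if_pos (Nat.le_add_left n j), Nat.add_sub_cancel, hOET x (j + n),
        pow_add, mul_apply_eq_comp]
    rw [hshift] at hSum2
    have h2 := (hasSum_nat_add_iff
      (f := fun m : ℕ => ⟪((MS (lp.single 2 n u)) m : Y), ((OET x) m : Y)⟫_ℂ) n).mp hSum2
    have hzero : ∑ i ∈ Finset.range n,
        ⟪((MS (lp.single 2 n u)) i : Y), ((OET x) i : Y)⟫_ℂ = 0 :=
      Finset.sum_eq_zero fun i hi => by
        have hilt := Finset.mem_range.mp hi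
        rw [hMSsingle n u i, if_neg (by omega), inner_zero_left]
    rw [hzero, add_zero] at h2
    rw [lhs1]
    exact (h2.unique hSum1).symm
  constructor
  · refine ⟨adjoint ι ∘L OET, ?_⟩
    rw [← hι]
    ext x
    simp [comp_apply]
  · intro MF hMFeq
    have hMF' : MF = adjoint ι ∘L OET := by
      ext x
      apply hιinj
      have h1 := DFunLike.congr_fun hMFeq x
      have h2 := DFunLike.congr_fun hι (OET x)
      simp only [comp_apply, sub_apply, one_apply] at h1 h2 ⊢
      rw [h1, ← h2]
    have hadj : adjoint MF = adjoint OET ∘L ι := by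
      rw [hMF', adjoint_comp, adjoint_adjoint]
    set ONT : X →L[ℂ] H2 U := adjoint MS ∘L OET with hONTdef
    have hONTadj : adjoint ONT = adjoint OET ∘L MS := by
      rw [hONTdef, adjoint_comp, adjoint_adjoint]
    have hP : adjoint MF ∘L MF = adjoint OET ∘L OET - adjoint ONT ∘L ONT := by
      rw [hadj, hMF']
      ext x
      have hpt := DFunLike.congr_fun hι (OET x)
      simp only [comp_apply, sub_apply, one_apply] at hpt ⊢
      rw [hpt, map_sub, hONTadj]
      simp only [hONTdef, comp_apply, one_apply_eq_self]
    refine ⟨⟨ONT, hONTapp, hP⟩, ?_, hadj⟩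
    rw [hP]
    ext x
    refine ext_inner_left ℂ fun v => ?_
    have hE := obs_inner T E OET hOET v x
    have hN2 := obs_inner T N ONT hONTapp v x
    simp only [sub_apply, comp_apply, inner_sub_right, adjoint_inner_right]
    linear_combination hE - hN2

end
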